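/- Let a,b,c,d ∈ ℝ⁴, λ ≠ 0, and define X(r,φ) = (a r + λb/r) cos φ + (c r - λd/r) sin φ. If |X_r|² = (1/r²)|X_φ|² for all r > 0 and all φ, then |a| = |c|, |b| = |d|, ⟨a,b⟩ = ⟨c,d⟩, ⟨a,c⟩ = 0 and ⟨b,d⟩ = 0. -/

import Mathlib

set_option maxHeartbeats 1000000


/-- `X(r,φ) = (a r + λ b / r) cos φ + (c r - λ d / r) sin φ` in ℝ⁴. -/
noncomputable def Y (a b c d : EuclideanSpace ℝ (Fin 4)) (lam r φ : ℝ) :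
    EuclideanSpace ℝ (Fin 4) :=
  Real.cos φ • (r • a + (lam / r) • b) + Real.sin φ • (r • c - (lam / r) • d)

/-- if `|X_r|² = (1/r²)|X_φ|²` for all `r > 0` and all `φ`, then
`|a| = |c|`, `|b| = |d|`, `⟨a,b⟩ = ⟨c,d⟩`, `⟨a,c⟩ = 0` and `⟨b,d⟩ = 0`. -/
theorem stmt6 (a b c d : EuclideanSpace ℝ (Fin 4)) (lam : ℝ) (hlam : lam ≠ 0)
    (hconf : ∀ r : ℝ, 0 < r → ∀ φ : ℝ,
      ‖deriv (fun s => Y a b c d lam s φ) r‖ ^ 2 =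
        (1 / r ^ 2) * ‖deriv (fun ψ => Y a b c d lam r ψ) φ‖ ^ 2) :
    ‖a‖ = ‖c‖ ∧ ‖b‖ = ‖d‖ ∧ (inner ℝ a b : ℝ) = (inner ℝ c d : ℝ) ∧
      (inner ℝ a c : ℝ) = 0 ∧ (inner ℝ b d : ℝ) = 0 := by
  have hds : ∀ r : ℝ, r ≠ 0 → ∀ φ : ℝ, HasDerivAt (fun s => Y a b c d lam s φ)
      (Real.cos φ • ((1:ℝ) • a + (-(lam/r^2)) • b) +
       Real.sin φ • ((1:ℝ) • c - (-(lam/r^2)) • d)) r := by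
    intro r hr φ
    have hinv : HasDerivAt (fun s : ℝ => lam / s) (-(lam / r^2)) r := by
      have h := (hasDerivAt_inv hr).const_mul lam
      have heq : lam * -(r^2)⁻¹ = -(lam / r^2) := by ring
      have h2 : HasDerivAt (fun s : ℝ => lam * s⁻¹) (-(lam / r^2)) r := heq ▸ h
      simpa [div_eq_mul_inv] using h2
    have ha : HasDerivAt (fun s : ℝ => s • a) ((1:ℝ) • a) r := (hasDerivAt_id r).smul_const a
    have hc : HasDerivAt (fun s : ℝ => s • c) ((1:ℝ) • c) r := (hasDerivAt_id r).smul_const c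
    exact ((ha.add (hinv.smul_const b)).const_smul (Real.cos φ)).add
      ((hc.sub (hinv.smul_const d)).const_smul (Real.sin φ))
  have hdφ : ∀ r φ : ℝ, HasDerivAt (fun ψ => Y a b c d lam r ψ)
      ((-Real.sin φ) • (r • a + (lam / r) • b) + Real.cos φ • (r • c - (lam / r) • d)) φ :=
    fun r φ => ((Real.hasDerivAt_cos φ).smul_const _).add ((Real.hasDerivAt_sin φ).smul_const _)
  have hE : ∀ r : ℝ, 0 < r → ∀ φ : ℝ,
      ‖Real.cos φ • ((1:ℝ) • a + (-(lam/r^2)) • b) +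
        Real.sin φ • ((1:ℝ) • c - (-(lam/r^2)) • d)‖^2
      = (1/r^2) * ‖(-Real.sin φ) • (r • a + (lam / r) • b) +
        Real.cos φ • (r • c - (lam / r) • d)‖^2 := by
    intro r hr φ
    rw [← (hds r hr.ne' φ).deriv, ← (hdφ r φ).deriv]
    exact hconf r hr φ
  have E1 := hE 1 one_pos 0
  have E2 := hE 2 two_pos 0
  have E3 := hE 3 (by norm_num) 0
  have G1 := hE 1 one_pos (Real.pi/4)
  have G2 := hE 2 two_pos (Real.pi/4)
  simp only [Real.cos_zero, Real.sin_zero, Real.cos_pi_div_four, Real.sin_pi_div_four,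
    ← real_inner_self_eq_norm_sq, inner_add_left, inner_add_right,
    inner_sub_left, inner_sub_right, real_inner_smul_left, real_inner_smul_right,
    one_smul] at E1 E2 E3 G1 G2
  simp only [real_inner_comm b a, real_inner_comm c a, real_inner_comm d a,
    real_inner_comm c b, real_inner_comm d b, real_inner_comm d c] at E1 E2 E3 G1 G2
  ring_nf at E1 E2 E3 G1 G2
  rw [Real.sq_sqrt (by norm_num : (0:ℝ) ≤ 2)] at G1 G2
  have hZ : lam ^ 2 * ((inner ℝ b b : ℝ) - inner ℝ d d) = 0 := by linarith
  have hY : lam * ((inner ℝ b a : ℝ) - inner ℝ d c) = 0 := by linarith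
  have hbb : (inner ℝ b b : ℝ) = inner ℝ d d := by
    rcases mul_eq_zero.mp hZ with h | h
    · exact absurd h (pow_ne_zero 2 hlam)
    · linarith
  have hba : (inner ℝ b a : ℝ) = inner ℝ d c := by
    rcases mul_eq_zero.mp hY with h | h
    · exact absurd h hlam
    · linarith
  have haa : (inner ℝ a a : ℝ) = inner ℝ c c := by linarith
  have hW : lam ^ 2 * (inner ℝ d b : ℝ) = 0 := by linarith
  have hdb : (inner ℝ d b : ℝ) = 0 := by
    rcases mul_eq_zero.mp hW with h | h
    · exact absurd h (pow_ne_zero 2 hlam)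
    · exact h
  have hca : (inner ℝ c a : ℝ) = 0 := by linarith
  refine ⟨?_, ?_, ?_, ?_, ?_⟩
  · have h2 : ‖a‖ ^ 2 = ‖c‖ ^ 2 := by
      rw [← real_inner_self_eq_norm_sq, ← real_inner_self_eq_norm_sq]; exact haa
    calc ‖a‖ = Real.sqrt (‖a‖ ^ 2) := (Real.sqrt_sq (norm_nonneg a)).symm
      _ = Real.sqrt (‖c‖ ^ 2) := by rw [h2]
      _ = ‖c‖ := Real.sqrt_sq (norm_nonneg c)
  · have h2 : ‖b‖ ^ 2 = ‖d‖ ^ 2 := by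
      rw [← real_inner_self_eq_norm_sq, ← real_inner_self_eq_norm_sq]; exact hbb
    calc ‖b‖ = Real.sqrt (‖b‖ ^ 2) := (Real.sqrt_sq (norm_nonneg b)).symm
      _ = Real.sqrt (‖d‖ ^ 2) := by rw [h2]
      _ = ‖d‖ := Real.sqrt_sq (norm_nonneg d)
  · rw [show (inner ℝ a b : ℝ) = inner ℝ b a from real_inner_comm _ _,
        show (inner ℝ c d : ℝ) = inner ℝ d c from real_inner_comm _ _]
    exact hba
  · rw [show (inner ℝ a c : ℝ) = inner ℝ c a from real_inner_comm _ _]; exact hca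
  · rw [show (inner ℝ b d : ℝ) = inner ℝ d b from real_inner_comm _ _]; exact hdb
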